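/- Let G be a split graph whose vertex set is partitioned into an independent set S and a clique K, and assume K is a maximum clique of G, i.e., |K| = ω(G). Then the strong transitivity of G equals the clique number of G: Tr_st(G) = ω(G). -/

import Mathlib

namespace StrongTrans

variable {V : Type*}

/-- The degree of a vertex (number of neighbours). -/
noncomputable def deg (G : SimpleGraph V) (v : V) : ℕ := Nat.card {w // G.Adj v w}

/-- `A` dominates `B`: every vertex of `B` has a neighbour in `A`. -/
def Dominates (G : SimpleGraph V) (A B : Set V) : Prop :=
  ∀ y ∈ B, ∃ x ∈ A, G.Adj x y

/-- `A` strongly dominates `B`: every vertex `y ∈ B` has a neighbour `x ∈ A`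
with `deg x ≥ deg y`. -/
def StronglyDominates (G : SimpleGraph V) (A B : Set V) : Prop :=
  ∀ y ∈ B, ∃ x ∈ A, G.Adj x y ∧ deg G y ≤ deg G x

/-- A transitive partition of `G` into `k` nonempty parts `P 0, …, P (k-1)`:
the parts are pairwise disjoint, cover `V`, and earlier parts dominate later ones. -/
structure IsTransitivePartition (G : SimpleGraph V) {k : ℕ} (P : Fin k → Set V) : Prop where
  nonempty : ∀ i, (P i).Nonempty
  pairwiseDisjoint : ∀ i j, i ≠ j → Disjoint (P i) (P j)
  covers : ∀ v, ∃ i, v ∈ P i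
  dominates : ∀ i j, i < j → Dominates G (P i) (P j)

/-- A strong transitive partition of `G` into `k` nonempty parts:
earlier parts strongly dominate later ones. -/
structure IsStrongTransitivePartition (G : SimpleGraph V) {k : ℕ} (P : Fin k → Set V) : Prop where
  nonempty : ∀ i, (P i).Nonempty
  pairwiseDisjoint : ∀ i j, i ≠ j → Disjoint (P i) (P j)
  covers : ∀ v, ∃ i, v ∈ P i
  stronglyDominates : ∀ i j, i < j → StronglyDominates G (P i) (P j)

/-- The transitivity `Tr(G)`: maximum size of a transitive partition. -/
noncomputable def transitivity (G : SimpleGraph V) : ℕ :=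
  sSup {k | ∃ P : Fin k → Set V, IsTransitivePartition G P}

/-- The strong transitivity `Tr_st(G)`: maximum size of a strong transitive partition. -/
noncomputable def strongTransitivity (G : SimpleGraph V) : ℕ :=
  sSup {k | ∃ P : Fin k → Set V, IsStrongTransitivePartition G P}


/-- A set of vertices is independent if no two of its vertices are adjacent. -/
def IsIndepSet (G : SimpleGraph V) (S : Set V) : Prop :=
  S.Pairwise fun a b => ¬ G.Adj a b

/-- for a split graph `G = (S ∪ K, E)` with `S` independent and `K`
a maximum clique (`|K| = ω(G)`), the strong transitivity equals the clique
number: `Tr_st(G) = ω(G)`. -/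
theorem strongTransitivity_eq_cliqueNum_of_split
    (V : Type*) [Fintype V] (G : SimpleGraph V) (S K : Set V)
    (hdisj : Disjoint S K) (hcover : S ∪ K = Set.univ)
    (hS : IsIndepSet G S) (hK : G.IsClique K)
    (hmax : K.ncard = G.cliqueNum) :
    strongTransitivity G = G.cliqueNum := by
  classical
  have hdeg_eq : ∀ v, deg G v = (G.neighborSet v).ncard := fun v =>
    Nat.card_coe_set_eq _
  have hKfin : K.Finite := Set.toFinite K
  have hmemSK : ∀ u : V, u ∈ S ∨ u ∈ K := by
    intro u
    have : u ∈ S ∪ K := hcover ▸ Set.mem_univ u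
    exact this
  -- neighbours of vertices of S lie in K
  have hSnbr : ∀ x ∈ S, ∀ w, G.Adj x w → w ∈ K := by
    intro x hx w hadj
    rcases hmemSK w with hw | hw
    · exact absurd hadj (hS hx hw (G.ne_of_adj hadj))
    · exact hw
  -- no vertex of S can have degree ≥ |K|
  have hSdeg : ∀ x ∈ S, K.ncard ≤ deg G x → False := by
    intro x hx hge
    have hsub : G.neighborSet x ⊆ K := fun w hw => hSnbr x hx w hw
    have heq : G.neighborSet x = K :=
      Set.eq_of_subset_of_ncard_le hsub (by rw [← hdeg_eq]; exact hge) hKfin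
    have hxK : x ∉ K := Set.disjoint_left.mp hdisj hx
    have hclq : G.IsClique (insert x K) := by
      apply hK.insert
      intro b hb _
      rw [← heq] at hb
      exact hb
    have hfin : (insert x K).Finite := hKfin.insert x
    have hcard : hfin.toFinset.card = K.ncard + 1 := by
      rw [← Set.ncard_eq_toFinset_card _ hfin,
        Set.ncard_insert_of_notMem hxK hKfin]
    have hle : hfin.toFinset.card ≤ G.cliqueNum := by
      refine SimpleGraph.IsClique.card_le_cliqueNum (tc := ?_)
      rwa [Set.Finite.coe_toFinset]
    rw [hcard, ← hmax] at hle
    omega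
  -- a vertex of K with a neighbour outside K has degree ≥ |K|
  have hKdeg : ∀ y ∈ K, ∀ z, z ∉ K → G.Adj y z → K.ncard ≤ deg G y := by
    intro y hy z hz hadj
    have hsub : insert z (K \ {y}) ⊆ G.neighborSet y := by
      rintro w (rfl | ⟨hwK, hwy⟩)
      · exact hadj
      · exact hK hy hwK (fun h => hwy (h.symm))
    have hzmem : z ∉ K \ {y} := fun h => hz h.1
    have h1 : (insert z (K \ {y})).ncard = (K \ {y}).ncard + 1 :=
      Set.ncard_insert_of_notMem hzmem hKfin.diff
    have h2 : (K \ {y}).ncard + 1 = K.ncard :=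
      Set.ncard_diff_singleton_add_one hy hKfin
    calc K.ncard = (insert z (K \ {y})).ncard := by rw [h1, h2]
      _ ≤ (G.neighborSet y).ncard := Set.ncard_le_ncard hsub (Set.toFinite _)
      _ = deg G y := (hdeg_eq y).symm
  -- upper bound
  have hub : ∀ k ∈ {k | ∃ P : Fin k → Set V, IsStrongTransitivePartition G P},
      k ≤ K.ncard := by
    rintro k ⟨P, hP⟩
    by_contra hlt
    push_neg at hlt
    have hj : K.ncard < k := hlt
    obtain ⟨y, hy⟩ := hP.nonempty ⟨K.ncard, hj⟩
    have hx : ∀ i : Fin K.ncard,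
        ∃ x, x ∈ P ⟨i.1, lt_trans i.2 hj⟩ ∧ G.Adj x y ∧ deg G y ≤ deg G x := by
      intro i
      exact hP.stronglyDominates ⟨i.1, lt_trans i.2 hj⟩ ⟨K.ncard, hj⟩
        (Fin.mk_lt_mk.mpr i.2) y hy
    choose x hxm hxa hxd using hx
    have hxinj : Function.Injective x := by
      intro i i' h
      by_contra hne
      have hne' : (⟨i.1, lt_trans i.2 hj⟩ : Fin k) ≠ ⟨i'.1, lt_trans i'.2 hj⟩ := by
        simp only [ne_eq, Fin.mk.injEq]
        exact fun hh => hne (Fin.ext hh)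
      have := (hP.pairwiseDisjoint _ _ hne').inter_eq
      have : x i ∈ (∅ : Set V) := this ▸ ⟨hxm i, h ▸ hxm i'⟩
      exact Set.notMem_empty _ this
    have hxy : ∀ i, x i ≠ y := fun i => G.ne_of_adj (hxa i)
    by_cases hcase : ∀ i, x i ∈ K
    · have hclq : G.IsClique (insert y (Set.range x)) := by
        apply SimpleGraph.IsClique.insert
        · rintro a ⟨i, rfl⟩ b ⟨i', rfl⟩ hab
          exact hK (hcase i) (hcase i') hab
        · rintro b ⟨i, rfl⟩ _
          exact (hxa i).symm
      have hfin : (insert y (Set.range x)).Finite := Set.toFinite _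
      have hcard : (insert y (Set.range x)).ncard = K.ncard + 1 := by
        rw [Set.ncard_insert_of_notMem (by rintro ⟨i, h⟩; exact hxy i h)
          (Set.toFinite _), ← Nat.card_coe_set_eq,
          Nat.card_range_of_injective hxinj, Nat.card_eq_fintype_card,
          Fintype.card_fin]
      have hcard' : hfin.toFinset.card = K.ncard + 1 := by
        rw [← Set.ncard_eq_toFinset_card _ hfin, hcard]
      have hle : hfin.toFinset.card ≤ G.cliqueNum := by
        refine SimpleGraph.IsClique.card_le_cliqueNum (tc := ?_)
        rwa [Set.Finite.coe_toFinset]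
      rw [hcard', ← hmax] at hle
      omega
    · push_neg at hcase
      obtain ⟨i, hxiK⟩ := hcase
      have hxiS : x i ∈ S := (hmemSK (x i)).resolve_right hxiK
      have hyK : y ∈ K := hSnbr (x i) hxiS y (hxa i)
      have h1 : K.ncard ≤ deg G y := hKdeg y hyK (x i) hxiK (hxa i).symm
      exact hSdeg (x i) hxiS (le_trans h1 (hxd i))
  have hle : strongTransitivity G ≤ K.ncard := csSup_le' hub
  rw [← hmax]
  rcases Nat.eq_zero_or_pos K.ncard with h0 | hpos
  · omega
  -- lower bound : construct a strong transitive partition of size |K|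
  · set m := K.ncard with hm
    let r : V → V → Bool := fun a b => decide (deg G b ≤ deg G a)
    let l : List V := hKfin.toFinset.toList.mergeSort r
    have hlperm : List.Perm l hKfin.toFinset.toList := List.mergeSort_perm _ _
    have hlen : l.length = m := by
      rw [hlperm.length_eq, Finset.length_toList,
        ← Set.ncard_eq_toFinset_card _ hKfin]
    have hmem : ∀ a, a ∈ l ↔ a ∈ K := by
      intro a
      rw [hlperm.mem_iff, Finset.mem_toList, Set.Finite.mem_toFinset]
    have hnd : l.Nodup := hlperm.nodup_iff.mpr (Finset.nodup_toList _)
    have hsorted : l.Pairwise (fun a b => r a b = true) :=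
      List.pairwise_mergeSort
        (fun a b c hab hbc => by
          simp only [r, decide_eq_true_eq] at *; omega)
        (fun a b => by
          simp only [r, Bool.or_eq_true, decide_eq_true_eq]
          exact Nat.le_total (deg G b) (deg G a))
        _
    let v : Fin m → V := fun i => l.get (Fin.cast hlen.symm i)
    have hvK : ∀ i, v i ∈ K := fun i => (hmem _).1 (l.get_mem _)
    have hvS : ∀ i, v i ∉ S := fun i => Set.disjoint_right.mp hdisj (hvK i)
    have hvinj : Function.Injective v := by
      intro i j h
      have := List.nodup_iff_injective_get.mp hnd h
      simpa [Fin.ext_iff] using this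
    have hvsorted : ∀ i j : Fin m, i < j → deg G (v j) ≤ deg G (v i) := by
      intro i j hij
      have := List.pairwise_iff_get.mp hsorted (Fin.cast hlen.symm i)
        (Fin.cast hlen.symm j) (by exact hij)
      simpa [r, v] using this
    let i0 : Fin m := ⟨0, hpos⟩
    let P : Fin m → Set V := fun i => if i = i0 then S ∪ {v i0} else {v i}
    have hvP : ∀ i, v i ∈ P i := by
      intro i
      by_cases h : i = i0
      · subst h; simp [P]
      · simp [P, h]
    have hPmem : m ∈ {k | ∃ P : Fin k → Set V, IsStrongTransitivePartition G P} := by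
      refine ⟨P, ?_, ?_, ?_, ?_⟩
      · exact fun i => ⟨v i, hvP i⟩
      · intro i j hne
        rw [Set.disjoint_left]
        intro a hai haj
        by_cases hi : i = i0
        · subst hi
          have hj : j ≠ i0 := fun h => hne h.symm
          simp only [P, if_pos rfl, if_neg hj, Set.mem_singleton_iff] at hai haj
          subst haj
          rcases hai with h | h
          · exact hvS j h
          · exact hj (hvinj h)
        · by_cases hj : j = i0
          · subst hj
            simp only [P, if_pos rfl, if_neg hi, Set.mem_singleton_iff] at hai haj
            subst hai
            rcases haj with h | h
            · exact hvS i h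
            · exact hi (hvinj h)
          · simp only [P, if_neg hi, if_neg hj, Set.mem_singleton_iff] at hai haj
            exact hne (hvinj (hai ▸ haj ▸ rfl))
      · intro u
        rcases hmemSK u with hu | hu
        · exact ⟨i0, by simp [P, hu]⟩
        · obtain ⟨idx, hidx⟩ := List.mem_iff_get.mp ((hmem u).2 hu)
          refine ⟨Fin.cast hlen idx, ?_⟩
          have : v (Fin.cast hlen idx) = u := by
            simpa [v, Fin.ext_iff] using hidx
          exact this ▸ hvP _
      · intro i j hij y hy
        have hj0 : j ≠ i0 := by
          intro h
          subst h
          exact absurd hij (by simp [i0, Fin.lt_def])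
        simp only [P, if_neg hj0, Set.mem_singleton_iff] at hy
        subst hy
        refine ⟨v i, hvP i, ?_, hvsorted i j hij⟩
        exact hK (hvK i) (hvK j) (fun h => (Fin.lt_iff_val_lt_val.mp hij).ne
          (congrArg Fin.val (hvinj h)))
      
    have hge : m ≤ strongTransitivity G :=
      le_csSup ⟨K.ncard, hub⟩ hPmem
    omega

end StrongTrans
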